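/- Let M₁ ≥ f > M₂ ≥ 0 be real numbers, and let g₀ ∈ 𝒜(M₁,f,M₂) be given by g₀(t) = M₁ for 0 ≤ t ≤ c and g₀(t) = M₂ for c < t < 1, where c = (f − M₂)/(M₁ − M₂). If g ∈ 𝒜(M₁,f,M₂) and g ≠ g₀, then I_g < f + (f − M₂)·log((M₁ − M₂)/(f − M₂)). -/

import Mathlib

open MeasureTheory Filter Set

noncomputable section

/-- `g` belongs to the class `𝒜(M₁, f, M₂)`: `g : [0,1) → [0,∞)` is decreasing,
left continuous on `(0,1)`, continuous at `0`, with `g 0 = M₁`,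
`lim_{t→1⁻} g t = M₂` and `∫₀¹ g = f`. -/
def memA (M₁ f M₂ : ℝ) (g : ℝ → ℝ) : Prop :=
  (∀ t ∈ Set.Ico (0 : ℝ) 1, 0 ≤ g t) ∧
  (∀ s ∈ Set.Ico (0 : ℝ) 1, ∀ t ∈ Set.Ico (0 : ℝ) 1, s ≤ t → g t ≤ g s) ∧
  (∀ t ∈ Set.Ioo (0 : ℝ) 1, Filter.Tendsto g (nhdsWithin t (Set.Iio t)) (nhds (g t))) ∧
  Filter.Tendsto g (nhdsWithin 0 (Set.Ioi 0)) (nhds (g 0)) ∧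
  g 0 = M₁ ∧
  Filter.Tendsto g (nhdsWithin 1 (Set.Iio 1)) (nhds M₂) ∧
  (∫ t in Set.Ioo (0 : ℝ) 1, g t) = f

/-- `I_g = ∫₀¹ ((1/t) ∫₀ᵗ g(u) du) dt`. -/
def Ig (g : ℝ → ℝ) : ℝ :=
  ∫ t in Set.Ioo (0 : ℝ) 1, (1 / t) * ∫ u in Set.Ioo (0 : ℝ) t, g u

set_option maxHeartbeats 2000000 in
theorem stmt10 (f M₁ M₂ : ℝ) (h1 : M₁ ≥ f) (h2 : f > M₂) (h3 : M₂ ≥ 0)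
    (g : ℝ → ℝ) (hg : memA M₁ f M₂ g)
    (hne : ∃ t ∈ Set.Ico (0 : ℝ) 1,
      g t ≠ if t ≤ (f - M₂) / (M₁ - M₂) then M₁ else M₂) :
    Ig g < f + (f - M₂) * Real.log ((M₁ - M₂) / (f - M₂)) := by
  obtain ⟨hpos, hmono, hlc, h0c, hg0, hlim, hintval⟩ := hg
  set c : ℝ := (f - M₂) / (M₁ - M₂) with hc
  have hM : M₂ < M₁ := lt_of_lt_of_le h2 h1
  have hMne : (0:ℝ) < M₁ - M₂ := sub_pos.mpr hM
  have hfM : (0:ℝ) < f - M₂ := sub_pos.mpr h2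
  have hM₁0 : (0:ℝ) ≤ M₁ := le_trans (le_trans h3 h2.le) h1
  have hc0 : 0 < c := div_pos hfM hMne
  have hc1 : c ≤ 1 := (div_le_one hMne).mpr (by linarith)
  have hcM : c * (M₁ - M₂) = f - M₂ := div_mul_cancel₀ _ hMne.ne'
  clear_value c
  -- upper and lower bounds for g
  have hub : ∀ t ∈ Set.Ico (0:ℝ) 1, g t ≤ M₁ := by
    intro t ht
    have := hmono 0 ⟨le_refl 0, one_pos⟩ t ht ht.1
    rwa [hg0] at this
  have hlb : ∀ t ∈ Set.Ico (0:ℝ) 1, M₂ ≤ g t := by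
    intro t ht
    refine le_of_tendsto hlim ?_
    filter_upwards [Ioo_mem_nhdsLT_of_mem (⟨ht.2, le_refl 1⟩ : (1:ℝ) ∈ Set.Ioc t 1)] with s hs
    exact hmono t ht s ⟨le_trans ht.1 hs.1.le, hs.2⟩ hs.1.le
  -- integrability of g on Ico 0 1
  have hgmeas : AEMeasurable g (volume.restrict (Set.Ico (0:ℝ) 1)) :=
    aemeasurable_restrict_of_antitoneOn measurableSet_Ico
      (fun s hs t ht hst => hmono s hs t ht hst)
  have hgint : IntegrableOn g (Set.Ico (0:ℝ) 1) := by
    refine Integrable.mono' (g := fun _ => M₁)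
      (integrableOn_const (by simp)) hgmeas.aestronglyMeasurable ?_
    filter_upwards [ae_restrict_mem measurableSet_Ico] with x hx
    rw [Real.norm_eq_abs, abs_of_nonneg (hpos x hx)]
    exact hub x hx
  have hgintS : ∀ s : Set ℝ, s ⊆ Set.Ico (0:ℝ) 1 → IntegrableOn g s := by
    intro s hs; exact hgint.mono_set hs
  set G : ℝ → ℝ := fun t => ∫ u in Set.Ioo (0:ℝ) t, g u with hGdef
  clear_value G
  -- splitting lemma
  have hsplit : ∀ t, 0 ≤ t → t ≤ 1 →
      (∫ u in Set.Ioo (0:ℝ) 1, g u) = G t + ∫ u in Set.Ico t 1, g u := by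
    intro t ht0 ht1
    simp only [hGdef]
    rcases eq_or_lt_of_le ht0 with h | h
    · rw [← h]
      simp only [Set.Ioo_self, Measure.restrict_empty, integral_zero_measure, zero_add]
      exact setIntegral_congr_set Ioo_ae_eq_Ico
    · rcases eq_or_lt_of_le ht1 with h1' | h1'
      · have : Set.Ico t 1 = (∅ : Set ℝ) := by rw [h1']; exact Set.Ico_self 1
        rw [this]; simp [h1']
      · rw [← Set.Ioo_union_Ico_eq_Ioo h h1'.le,
          setIntegral_union (by rw [Set.disjoint_left]; intro x hx hx2; exact absurd hx.2 (not_lt.mpr hx2.1)) measurableSet_Ico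
            (hgintS _ (fun x hx => ⟨hx.1.le, lt_of_lt_of_le hx.2 ht1⟩))
            (hgintS _ (fun x hx => ⟨le_trans ht0 hx.1, hx.2⟩))]
  -- G is nonneg and bounded
  have hGnn : ∀ t, t ≤ 1 → 0 ≤ G t := by
    intro t ht
    simp only [hGdef]
    apply setIntegral_nonneg measurableSet_Ioo
    intro x hx; exact hpos x ⟨hx.1.le, lt_of_lt_of_le hx.2 ht⟩
  have hGle1 : ∀ t, 0 ≤ t → t ≤ 1 → G t ≤ M₁ * t := by
    intro t ht0 ht1
    simp only [hGdef]
    calc (∫ u in Set.Ioo (0:ℝ) t, g u) ≤ ∫ _ in Set.Ioo (0:ℝ) t, M₁ := by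
          apply setIntegral_mono_on
            (hgintS _ (fun x hx => ⟨hx.1.le, lt_of_lt_of_le hx.2 ht1⟩))
            (integrableOn_const (by simp)) measurableSet_Ioo
          intro x hx; exact hub x ⟨hx.1.le, lt_of_lt_of_le hx.2 ht1⟩
      _ = M₁ * t := by
          rw [setIntegral_const, Real.volume_real_Ioo_of_le (by linarith), smul_eq_mul]
          ring
  have hTail : ∀ t, 0 ≤ t → t ≤ 1 → M₂ * (1 - t) ≤ ∫ u in Set.Ico t 1, g u := by
    intro t ht0 ht1
    calc M₂ * (1 - t) = ∫ _ in Set.Ico t 1, M₂ := by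
          rw [setIntegral_const, Real.volume_real_Ico_of_le (by linarith), smul_eq_mul]
          ring
      _ ≤ _ := by
          apply setIntegral_mono_on (integrableOn_const (by simp))
            (hgintS _ (fun x hx => ⟨le_trans ht0 hx.1, hx.2⟩)) measurableSet_Ico
          intro x hx; exact hlb x ⟨le_trans ht0 hx.1, hx.2⟩
  have hGle2 : ∀ t, 0 ≤ t → t ≤ 1 → G t ≤ (f - M₂) + M₂ * t := by
    intro t ht0 ht1
    have h := hsplit t ht0 ht1
    have h2' := hTail t ht0 ht1
    rw [hintval] at h
    linarith
  -- the comparison function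
  set G₀ : ℝ → ℝ := fun t => min (M₁ * t) ((f - M₂) + M₂ * t) with hG₀def
  clear_value G₀
  have hweak : ∀ t, 0 ≤ t → t ≤ 1 → G t ≤ G₀ t := by
    intro t h0 h1'
    simp only [hG₀def]
    exact le_min (hGle1 t h0 h1') (hGle2 t h0 h1')
  have hdisj : ∀ p q r : ℝ, Disjoint (Set.Ioo p q) (Set.Ico q r) :=
    fun p q r => Set.Ico_disjoint_Ico_same.mono_left Set.Ioo_subset_Ico_self
  -- strict inequality on a subinterval
  obtain ⟨a, b, ha0, hab, hb1, hstrict⟩ :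
      ∃ a b : ℝ, 0 < a ∧ a < b ∧ b ≤ 1 ∧ ∀ t ∈ Set.Ioo a b, G t < G₀ t := by
    by_cases H1 : ∃ t₀, c < t₀ ∧ t₀ < 1 ∧ M₂ < g t₀
    · obtain ⟨t₀, hct₀, ht₀1, hgt₀⟩ := H1
      have ht₀0 : (0:ℝ) < t₀ := lt_trans hc0 hct₀
      refine ⟨c, t₀, hc0, hct₀, ht₀1.le, ?_⟩
      intro t ht
      have ht0 : 0 < t := lt_trans hc0 ht.1
      have ht1' : t ≤ 1 := le_trans ht.2.le ht₀1.le
      have hs := hsplit t ht0.le ht1'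
      rw [hintval] at hs
      have hint2 : (∫ u in Set.Ico t t₀, g u) + (∫ u in Set.Ico t₀ 1, g u)
          = ∫ u in Set.Ico t 1, g u := by
        rw [← Set.Ico_union_Ico_eq_Ico ht.2.le ht₀1.le,
          setIntegral_union Set.Ico_disjoint_Ico_same measurableSet_Ico
          (hgintS _ (fun x hx => ⟨le_trans ht0.le hx.1, lt_of_lt_of_le hx.2 ht₀1.le⟩))
          (hgintS _ (fun x hx => ⟨le_trans ht₀0.le hx.1, hx.2⟩))]
      have hI1 : g t₀ * (t₀ - t) ≤ ∫ u in Set.Ico t t₀, g u := by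
        have heq : g t₀ * (t₀ - t) = ∫ _ in Set.Ico t t₀, g t₀ := by
          rw [setIntegral_const, Real.volume_real_Ico_of_le (by linarith [ht.2]), smul_eq_mul]
          ring
        rw [heq]
        apply setIntegral_mono_on (integrableOn_const (by simp))
          (hgintS _ (fun x hx => ⟨le_trans ht0.le hx.1, lt_of_lt_of_le hx.2 ht₀1.le⟩))
          measurableSet_Ico
        intro x hx
        exact hmono x ⟨le_trans ht0.le hx.1, lt_of_lt_of_le hx.2 ht₀1.le⟩ t₀
          ⟨ht₀0.le, ht₀1⟩ hx.2.le
      have hI2 := hTail t₀ ht₀0.le ht₀1.le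
      have hGt : G t < (f - M₂) + M₂ * t := by nlinarith [ht.2]
      have hmin : (f - M₂) + M₂ * t ≤ M₁ * t := by nlinarith [ht.1]
      simp only [hG₀def]
      exact lt_min (lt_of_lt_of_le hGt hmin) hGt
    · push_neg at H1
      have hflat : ∀ t, c < t → t < 1 → g t = M₂ := fun t h h' =>
        le_antisymm (H1 t h h') (hlb t ⟨(lt_trans hc0 h).le, h'⟩)
      by_cases H2 : ∃ t₀, 0 < t₀ ∧ t₀ < c ∧ g t₀ < M₁
      · obtain ⟨t₀, ht₀0, ht₀c, hgt₀⟩ := H2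
        refine ⟨t₀, c, ht₀0, ht₀c, hc1, ?_⟩
        intro t ht
        have ht0 : 0 < t := lt_trans ht₀0 ht.1
        have ht1' : t ≤ 1 := le_trans ht.2.le hc1
        have hGadd : G t = G t₀ + ∫ u in Set.Ico t₀ t, g u := by
          simp only [hGdef]
          rw [← Set.Ioo_union_Ico_eq_Ioo ht₀0 ht.1.le,
            setIntegral_union (hdisj 0 t₀ t) measurableSet_Ico
            (hgintS _ (fun x hx => ⟨hx.1.le, lt_trans hx.2 (lt_of_lt_of_le ht.1 ht1')⟩))
            (hgintS _ (fun x hx => ⟨le_trans ht₀0.le hx.1, lt_of_lt_of_le hx.2 ht1'⟩))]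
        have hI1 : (∫ u in Set.Ico t₀ t, g u) ≤ g t₀ * (t - t₀) := by
          have heq : g t₀ * (t - t₀) = ∫ _ in Set.Ico t₀ t, g t₀ := by
            rw [setIntegral_const, Real.volume_real_Ico_of_le (by linarith [ht.1]), smul_eq_mul]
            ring
          rw [heq]
          apply setIntegral_mono_on
            (hgintS _ (fun x hx => ⟨le_trans ht₀0.le hx.1, lt_of_lt_of_le hx.2 ht1'⟩))
            (integrableOn_const (by simp))
            measurableSet_Ico
          intro x hx
          exact hmono t₀ ⟨ht₀0.le, lt_of_lt_of_le ht₀c hc1⟩ x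
            ⟨le_trans ht₀0.le hx.1, lt_of_lt_of_le hx.2 ht1'⟩ hx.1
        have hGt₀ := hGle1 t₀ ht₀0.le (le_trans ht₀c.le hc1)
        have hGt : G t < M₁ * t := by nlinarith [ht.1]
        have hmin : M₁ * t ≤ (f - M₂) + M₂ * t := by nlinarith [ht.2]
        simp only [hG₀def]
        exact lt_min hGt (lt_of_lt_of_le hGt hmin)
      · exfalso
        push_neg at H2
        obtain ⟨t, ht, hneq⟩ := hne
        rcases lt_trichotomy t c with h | h | h
        · rcases eq_or_lt_of_le ht.1 with h0 | h0
          · rw [if_pos h.le] at hneq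
            exact hneq (by rw [← h0, hg0])
          · rw [if_pos h.le] at hneq
            exact hneq (le_antisymm (hub t ht) (H2 t h0 h))
        · rw [if_pos h.le] at hneq
          have hc1' : c < 1 := h ▸ ht.2
          have heq : (fun _ : ℝ => M₁) =ᶠ[nhdsWithin c (Set.Iio c)] g := by
            filter_upwards [Ioo_mem_nhdsLT_of_mem (⟨hc0, le_refl c⟩ : c ∈ Set.Ioc (0:ℝ) c)]
              with x hx
            exact (le_antisymm (hub x ⟨hx.1.le, lt_trans hx.2 hc1'⟩) (H2 x hx.1 hx.2)).symm
          have h2' : Tendsto g (nhdsWithin c (Set.Iio c)) (nhds M₁) :=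
            tendsto_const_nhds.congr' heq
          have : g c = M₁ := tendsto_nhds_unique (hlc c ⟨hc0, hc1'⟩) h2'
          exact hneq (by rw [h]; exact this)
        · rw [if_neg (not_le.mpr h)] at hneq
          exact hneq (hflat t h ht.2)
  -- the integrands
  set φ : ℝ → ℝ := fun t => (1/t) * G t with hφdef
  clear_value φ
  set Φ : ℝ → ℝ := fun t => (1/t) * G₀ t with hΦdef
  clear_value Φ
  have hGmono : MonotoneOn G (Set.Ioo (0:ℝ) 1) := by
    intro s hs t ht hst
    have hGadd : G t = G s + ∫ u in Set.Ico s t, g u := by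
      simp only [hGdef]
      rw [← Set.Ioo_union_Ico_eq_Ioo hs.1 hst,
        setIntegral_union (hdisj 0 s t) measurableSet_Ico
        (hgintS _ (fun x hx => ⟨hx.1.le, lt_trans (lt_of_lt_of_le hx.2 hst) ht.2⟩))
        (hgintS _ (fun x hx => ⟨le_trans hs.1.le hx.1, lt_trans hx.2 ht.2⟩))]
    have : 0 ≤ ∫ u in Set.Ico s t, g u := by
      apply setIntegral_nonneg measurableSet_Ico
      intro x hx
      exact hpos x ⟨le_trans hs.1.le hx.1, lt_trans hx.2 ht.2⟩
    rw [hGadd]; linarith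
  have hφmeas : AEMeasurable φ (volume.restrict (Set.Ioo (0:ℝ) 1)) := by
    rw [hφdef]
    exact ((measurable_const.div measurable_id).aemeasurable).mul
      (aemeasurable_restrict_of_monotoneOn measurableSet_Ioo hGmono)
  have hφbd : ∀ x ∈ Set.Ioo (0:ℝ) 1, 0 ≤ φ x ∧ φ x ≤ M₁ := by
    intro x hx
    have hx0 : 0 < x := hx.1
    simp only [hφdef]
    refine ⟨mul_nonneg (one_div_nonneg.mpr hx0.le) (hGnn x hx.2.le), ?_⟩
    have hb := hGle1 x hx0.le hx.2.le
    have h2' : (1/x) * G x ≤ (1/x) * (M₁ * x) :=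
      mul_le_mul_of_nonneg_left hb (one_div_nonneg.mpr hx0.le)
    have h3' : (1/x) * (M₁ * x) = M₁ := by field_simp
    rw [← h3']; exact h2'
  have hφint : IntegrableOn φ (Set.Ioo (0:ℝ) 1) := by
    refine Integrable.mono' (g := fun _ => M₁) (integrableOn_const (by simp))
      hφmeas.aestronglyMeasurable ?_
    filter_upwards [ae_restrict_mem measurableSet_Ioo] with x hx
    rw [Real.norm_eq_abs, abs_of_nonneg (hφbd x hx).1]
    exact (hφbd x hx).2
  have hΦmeas : Measurable Φ := by
    rw [hΦdef, hG₀def]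
    exact (measurable_const.div measurable_id).mul
      ((measurable_const.mul measurable_id).min
        (measurable_const.add (measurable_const.mul measurable_id)))
  have hΦbd : ∀ x ∈ Set.Icc (0:ℝ) 1, 0 ≤ Φ x ∧ Φ x ≤ M₁ := by
    intro x hx
    rcases eq_or_lt_of_le hx.1 with h | h
    · constructor <;> simp [hΦdef, hG₀def, ← h, hM₁0]
    · have hmin0 : 0 ≤ G₀ x := by
        simp only [hG₀def]
        exact le_min (mul_nonneg hM₁0 h.le) (by nlinarith [hx.2])
      simp only [hΦdef]
      refine ⟨mul_nonneg (one_div_nonneg.mpr h.le) hmin0, ?_⟩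
      have h2' : (1/x) * G₀ x ≤ (1/x) * (M₁ * x) := by
        refine mul_le_mul_of_nonneg_left ?_ (one_div_nonneg.mpr h.le)
        simp only [hG₀def]
        exact min_le_left _ _
      have h3' : (1/x) * (M₁ * x) = M₁ := by field_simp
      rw [← h3']; exact h2'
  have hΦint : IntegrableOn Φ (Set.Icc (0:ℝ) 1) := by
    refine Integrable.mono' (g := fun _ => M₁) (integrableOn_const (by simp))
      hΦmeas.aestronglyMeasurable.restrict ?_
    filter_upwards [ae_restrict_mem measurableSet_Icc] with x hx
    rw [Real.norm_eq_abs, abs_of_nonneg (hΦbd x hx).1]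
    exact (hΦbd x hx).2
  have hΦint' : IntegrableOn Φ (Set.Ioo (0:ℝ) 1) :=
    hΦint.mono_set Set.Ioo_subset_Icc_self
  -- strict inequality of the integrals
  have key : (∫ t in Set.Ioo (0:ℝ) 1, φ t) < ∫ t in Set.Ioo (0:ℝ) 1, Φ t := by
    have hnn : 0 ≤ᵐ[volume.restrict (Set.Ioo (0:ℝ) 1)] fun t => Φ t - φ t := by
      filter_upwards [ae_restrict_mem measurableSet_Ioo] with x hx
      have hw := hweak x hx.1.le hx.2.le
      have h1x : (0:ℝ) ≤ 1/x := one_div_nonneg.mpr hx.1.le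
      have := mul_le_mul_of_nonneg_left hw h1x
      simp only [Pi.zero_apply, hφdef, hΦdef]
      linarith
    have hdiff : 0 < ∫ t in Set.Ioo (0:ℝ) 1, (Φ t - φ t) := by
      rw [setIntegral_pos_iff_support_of_nonneg_ae hnn (hΦint'.sub hφint)]
      have hsub : Set.Ioo a b ⊆
          Function.support (fun t => Φ t - φ t) ∩ Set.Ioo 0 1 := by
        intro t ht
        have ht01 : t ∈ Set.Ioo (0:ℝ) 1 := ⟨lt_trans ha0 ht.1, lt_of_lt_of_le ht.2 hb1⟩
        refine ⟨?_, ht01⟩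
        have hst := hstrict t ht
        have h1t : (0:ℝ) < 1/t := one_div_pos.mpr ht01.1
        have : (1/t) * G t < (1/t) * G₀ t := by
          exact mul_lt_mul_of_pos_left hst h1t
        have : 0 < Φ t - φ t := by
          simp only [hφdef, hΦdef]
          linarith
        exact ne_of_gt this
      calc (0:ENNReal) < ENNReal.ofReal (b - a) := ENNReal.ofReal_pos.mpr (sub_pos.mpr hab)
        _ = volume (Set.Ioo a b) := (Real.volume_Ioo).symm
        _ ≤ _ := measure_mono hsub
    have hsub2 := integral_sub hΦint' hφint
    rw [hsub2] at hdiff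
    linarith
  -- computing the integral of Φ
  have hΦval : (∫ t in Set.Ioo (0:ℝ) 1, Φ t)
      = f + (f - M₂) * Real.log ((M₁ - M₂) / (f - M₂)) := by
    have hii1 : IntervalIntegrable Φ volume 0 c := by
      rw [intervalIntegrable_iff_integrableOn_Ioc_of_le hc0.le]
      exact hΦint.mono_set (fun x hx => ⟨hx.1.le, le_trans hx.2 hc1⟩)
    have hii2 : IntervalIntegrable Φ volume c 1 := by
      rw [intervalIntegrable_iff_integrableOn_Ioc_of_le hc1]
      exact hΦint.mono_set (fun x hx => ⟨le_trans hc0.le hx.1.le, hx.2⟩)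
    have e1 : (∫ t in Set.Ioo (0:ℝ) 1, Φ t) = ∫ t in (0:ℝ)..1, Φ t := by
      rw [intervalIntegral.integral_of_le zero_le_one, integral_Ioc_eq_integral_Ioo]
    have e2 : (∫ t in (0:ℝ)..c, Φ t) = M₁ * c := by
      rw [intervalIntegral.integral_of_le hc0.le,
        setIntegral_congr_fun measurableSet_Ioc (g := fun _ : ℝ => M₁) ?_]
      · rw [setIntegral_const, Real.volume_real_Ioc_of_le (by linarith), smul_eq_mul]
        ring
      · intro x hx
        have hx0 : 0 < x := hx.1
        have hmineq : min (M₁ * x) ((f - M₂) + M₂ * x) = M₁ * x :=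
          min_eq_left (by nlinarith [mul_nonneg (sub_nonneg.mpr hx.2) hMne.le, hcM])
        simp only [hΦdef, hG₀def]
        rw [hmineq]
        field_simp
    have e3 : (∫ t in c..(1:ℝ), Φ t)
        = M₂ * (1 - c) + (f - M₂) * Real.log (1/c) := by
      have hcongr : Set.EqOn Φ (fun x => M₂ + (f - M₂) * (1/x)) (Set.Ioc c 1) := by
        intro x hx
        have hx0 : 0 < x := lt_trans hc0 hx.1
        have hmineq : min (M₁ * x) ((f - M₂) + M₂ * x) = (f - M₂) + M₂ * x :=
          min_eq_right (by nlinarith [mul_nonneg (sub_nonneg.mpr hx.1.le) hMne.le, hcM])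
        simp only [hΦdef, hG₀def]
        rw [hmineq]
        field_simp
        ring
      have hnz : ∀ x : ℝ, x ∈ Set.uIcc c 1 → x ≠ 0 := by
        intro x hx
        rw [Set.uIcc_of_le hc1] at hx
        exact ne_of_gt (lt_of_lt_of_le hc0 hx.1)
      have h0n : (0:ℝ) ∉ Set.uIcc c 1 := fun h => (hnz 0 h) rfl
      rw [intervalIntegral.integral_of_le hc1,
        setIntegral_congr_fun measurableSet_Ioc hcongr,
        ← intervalIntegral.integral_of_le hc1,
        intervalIntegral.integral_add intervalIntegrable_const
          ((intervalIntegral.intervalIntegrable_one_div hnz continuousOn_id).const_mul (f - M₂)),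
        intervalIntegral.integral_const,
        intervalIntegral.integral_const_mul, integral_one_div h0n,
        smul_eq_mul]
      ring_nf
    calc (∫ t in Set.Ioo (0:ℝ) 1, Φ t) = ∫ t in (0:ℝ)..1, Φ t := e1
      _ = (∫ t in (0:ℝ)..c, Φ t) + ∫ t in c..(1:ℝ), Φ t :=
          (intervalIntegral.integral_add_adjacent_intervals hii1 hii2).symm
      _ = M₁ * c + (M₂ * (1 - c) + (f - M₂) * Real.log (1/c)) := by rw [e2, e3]
      _ = f + (f - M₂) * Real.log ((M₁ - M₂) / (f - M₂)) := by
          rw [show (1:ℝ)/c = (M₁ - M₂) / (f - M₂) by rw [hc, one_div_div]]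
          linear_combination hcM
  have hIg : Ig g = ∫ t in Set.Ioo (0:ℝ) 1, φ t := by
    simp only [Ig, hφdef, hGdef]
  rw [hIg, ← hΦval]
  exact key
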